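/- Let g : ℝ≥0 → [0,1] be non-increasing with lim_{x→∞} g(x) x² (log x)² = 0, 0 < C = ∫_{ℝ²} g(‖x‖)dx < ∞, b ∈ ℝ, and r_ρ = sqrt((log ρ + b)/(Cρ)). Then lim_{ρ→∞} ρ · exp(-(log ρ + b)/C · ∫_{A_{1/r_ρ}} g(‖x‖) dx) = e^{-b}, where A_{1/r_ρ} = [-1/(2r_ρ), 1/(2r_ρ)]². -/

import Mathlib

open MeasureTheory Filter Real Set Topology

lemma polar2 (f : ℝ → ℝ) :
    ∫ x : EuclideanSpace ℝ (Fin 2), f ‖x‖ = 2 * π * ∫ y in Set.Ioi (0:ℝ), y * f y := by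
  have h := MeasureTheory.integral_fun_norm_addHaar (volume : Measure (EuclideanSpace ℝ (Fin 2))) f
  have hdim : Module.finrank ℝ (EuclideanSpace ℝ (Fin 2)) = 2 := finrank_euclideanSpace_fin
  rw [h, hdim]
  have hball : (volume (Metric.ball (0 : EuclideanSpace ℝ (Fin 2)) 1)).toReal = π := by
    rw [EuclideanSpace.volume_ball]
    norm_num [Real.Gamma_two, Real.sq_sqrt Real.pi_nonneg, ENNReal.toReal_ofReal Real.pi_nonneg]
  rw [measureReal_def, hball]
  simp only [nsmul_eq_mul, smul_eq_mul, pow_one, Nat.cast_ofNat]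
  rw [show (fun y : ℝ => y ^ 1 * f y) = fun y : ℝ => y * f y from funext fun y => by ring]
  ring

lemma tail_eq (g : ℝ → ℝ) {R : ℝ} (hR : 0 < R) :
    ∫ x in {x : EuclideanSpace ℝ (Fin 2) | R ≤ ‖x‖}, g ‖x‖
      = 2 * π * ∫ y in Set.Ioi R, y * g y := by
  have hmeas : MeasurableSet {x : EuclideanSpace ℝ (Fin 2) | R ≤ ‖x‖} :=
    (isClosed_le continuous_const continuous_norm).measurableSet
  have h1 : ∫ x in {x : EuclideanSpace ℝ (Fin 2) | R ≤ ‖x‖}, g ‖x‖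
      = ∫ x : EuclideanSpace ℝ (Fin 2), (Set.Ici R).indicator g ‖x‖ := by
    rw [← integral_indicator hmeas]
    congr 1
  rw [h1, polar2]
  congr 1
  have h2 : ∀ y : ℝ, y * (Set.Ici R).indicator g y = (Set.Ici R).indicator (fun y => y * g y) y := by
    intro y
    simp [Set.indicator_apply]
  simp only [h2]
  rw [setIntegral_indicator measurableSet_Ici, Set.inter_eq_right.mpr (Set.Ici_subset_Ioi.mpr hR)]
  exact integral_Ici_eq_integral_Ioi

lemma hasDeriv_negInvLog {y : ℝ} (hy : 1 < y) :
    HasDerivAt (fun t : ℝ => -(Real.log t)⁻¹) (1 / (y * (Real.log y) ^ 2)) y := by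
  have hlt : (0:ℝ) < y := lt_trans one_pos hy
  have hlog : Real.log y ≠ 0 := ne_of_gt (Real.log_pos hy)
  have h1 : HasDerivAt Real.log y⁻¹ y := Real.hasDerivAt_log (ne_of_gt hlt)
  have h2 := (h1.inv hlog).neg
  rw [show (1 / (y * (Real.log y) ^ 2)) = -(-y⁻¹ / Real.log y ^ 2) by field_simp]
  exact h2

lemma tendsto_negInvLog : Tendsto (fun t : ℝ => -(Real.log t)⁻¹) atTop (𝓝 0) := by
  have := (Real.tendsto_log_atTop.inv_tendsto_atTop).neg
  rwa [neg_zero] at this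

lemma intOn_one_div_mul_log_sq {a : ℝ} (ha : 1 < a) :
    IntegrableOn (fun y : ℝ => 1 / (y * (Real.log y) ^ 2)) (Set.Ioi a) := by
  refine integrableOn_Ioi_deriv_of_nonneg
    (hasDeriv_negInvLog ha).continuousAt.continuousWithinAt
    (fun y hy => hasDeriv_negInvLog (ha.trans hy)) (fun y hy => ?_)
    tendsto_negInvLog
  have hy1 : 1 < y := ha.trans hy
  positivity

lemma integral_one_div_mul_log_sq {a : ℝ} (ha : 1 < a) :
    (∫ y in Set.Ioi a, 1 / (y * (Real.log y) ^ 2)) = 1 / Real.log a := by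
  have := integral_Ioi_of_hasDerivAt_of_nonneg
    (hasDeriv_negInvLog ha).continuousAt.continuousWithinAt
    (fun y hy => hasDeriv_negInvLog (ha.trans hy))
    (fun y hy => by have hy1 : 1 < y := ha.trans hy; positivity) tendsto_negInvLog
  rw [this]
  rw [one_div]
  ring

lemma log_three_gt_one : (1:ℝ) < Real.log 3 := by
  rw [Real.lt_log_iff_exp_lt (by norm_num)]
  have := Real.exp_one_lt_d9
  linarith

lemma tail_tendsto (g : ℝ → ℝ)
    (hg01 : ∀ x, 0 ≤ x → 0 ≤ g x ∧ g x ≤ 1)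
    (hmono : AntitoneOn g (Set.Ici 0))
    (hsmall : Tendsto (fun x : ℝ => g x * x ^ 2 * (Real.log x) ^ 2) atTop (nhds 0)) :
    Tendsto (fun R : ℝ =>
      Real.log R * ∫ x in {x : EuclideanSpace ℝ (Fin 2) | R ≤ ‖x‖}, g ‖x‖) atTop (𝓝 0) := by
  rw [Metric.tendsto_atTop]
  intro ε hε
  set ε' := ε / (4 * π + 1) with hε'def
  have hπ := Real.pi_pos
  have hε' : 0 < ε' := by positivity
  obtain ⟨X₀, hX₀⟩ := eventually_atTop.mp (hsmall.eventually (gt_mem_nhds hε'))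
  refine ⟨max X₀ 3, fun R hR => ?_⟩
  have hR3 : (3:ℝ) ≤ R := le_trans (le_max_right _ _) hR
  have hRX : X₀ ≤ R := le_trans (le_max_left _ _) hR
  have hR1 : (1:ℝ) < R := by linarith
  have hR0 : (0:ℝ) < R := by linarith
  have hlogR : 1 < Real.log R := lt_of_lt_of_le log_three_gt_one
    (Real.log_le_log (by norm_num) hR3)
  -- pointwise bound on Ioi R
  have hpt : ∀ y ∈ Set.Ioi R, y * g y ≤ ε' * (1 / (y * (Real.log y) ^ 2)) := by
    intro y hy
    have hy1 : 1 < y := hR1.trans hy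
    have hy0 : 0 < y := lt_trans one_pos hy1
    have hlogy : 0 < Real.log y := Real.log_pos hy1
    have hb := le_of_lt (hX₀ y (le_of_lt (lt_of_le_of_lt hRX hy)))
    have key : y * g y = (g y * y ^ 2 * (Real.log y) ^ 2) / (y * (Real.log y) ^ 2) := by
      field_simp
    rw [key, mul_one_div]
    exact div_le_div_of_nonneg_right hb (by positivity) |>.trans_eq rfl
  -- integrability
  have hintOn : IntegrableOn (fun y : ℝ => 1 / (y * (Real.log y) ^ 2)) (Set.Ioi R) :=
    intOn_one_div_mul_log_sq hR1
  have hmeasg : AEMeasurable (fun y : ℝ => y * g y) (volume.restrict (Set.Ioi R)) := by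
    exact aemeasurable_id.mul (aemeasurable_restrict_of_antitoneOn measurableSet_Ioi
      (hmono.mono (fun y hy => le_of_lt (lt_trans hR0 hy))))
  have hintg : IntegrableOn (fun y : ℝ => y * g y) (Set.Ioi R) := by
    refine Integrable.mono' (hintOn.const_mul ε') hmeasg.aestronglyMeasurable ?_
    refine (ae_restrict_iff' measurableSet_Ioi).mpr (Filter.Eventually.of_forall fun y hy => ?_)
    have hy0 : 0 < y := lt_trans hR0 hy
    rw [Real.norm_eq_abs, abs_of_nonneg (mul_nonneg hy0.le (hg01 y hy0.le).1)]
    exact hpt y hy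
  -- integral bound
  have hIb : (∫ y in Set.Ioi R, y * g y) ≤ ε' * (1 / Real.log R) := by
    calc (∫ y in Set.Ioi R, y * g y)
        ≤ ∫ y in Set.Ioi R, ε' * (1 / (y * (Real.log y) ^ 2)) :=
          setIntegral_mono_on hintg (hintOn.const_mul ε') measurableSet_Ioi hpt
      _ = ε' * ∫ y in Set.Ioi R, 1 / (y * (Real.log y) ^ 2) := integral_const_mul _ _
      _ = ε' * (1 / Real.log R) := by rw [integral_one_div_mul_log_sq hR1]
  have hTnn : 0 ≤ ∫ x in {x : EuclideanSpace ℝ (Fin 2) | R ≤ ‖x‖}, g ‖x‖ :=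
    setIntegral_nonneg (isClosed_le continuous_const continuous_norm).measurableSet
      (fun x _ => (hg01 ‖x‖ (norm_nonneg x)).1)
  rw [Real.dist_eq, sub_zero, abs_of_nonneg (mul_nonneg (by linarith) hTnn), tail_eq g hR0]
  calc Real.log R * (2 * π * ∫ y in Set.Ioi R, y * g y)
      ≤ Real.log R * (2 * π * (ε' * (1 / Real.log R))) := by
        have h2π : (0:ℝ) < 2 * π := by positivity
        nlinarith [mul_le_mul_of_nonneg_left hIb h2π.le]
    _ = 2 * π * ε' := by field_simp
    _ < ε := by
        have heq : 2 * π * ε' = 2 * π * ε / (4 * π + 1) := by rw [hε'def]; ring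
        rw [heq, div_lt_iff₀ (by positivity)]
        nlinarith

lemma sqrt_tendsto_atTop : Tendsto Real.sqrt atTop atTop := by
  refine tendsto_atTop_atTop.mpr fun M => ⟨(max M 0) ^ 2, fun a ha => ?_⟩
  calc M ≤ max M 0 := le_max_left _ _
    _ = Real.sqrt ((max M 0) ^ 2) := (Real.sqrt_sq (le_max_right _ _)).symm
    _ ≤ Real.sqrt a := Real.sqrt_le_sqrt ha

/-- Let `g : ℝ≥0 → [0,1]` be non-increasing with
`lim_{x→∞} g(x) x² (log x)² = 0`, `0 < C = ∫_{ℝ²} g(‖x‖) dx < ∞`, `b ∈ ℝ`, and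
`r_ρ = sqrt((log ρ + b)/(Cρ))`.  Then
`lim_{ρ→∞} ρ · exp(-(log ρ + b)/C · ∫_{A_{1/r_ρ}} g(‖x‖) dx) = e^{-b}`, where
`A_{1/r_ρ} = [-1/(2r_ρ), 1/(2r_ρ)]²`. -/
theorem stmt_7 (g : ℝ → ℝ) (C b : ℝ)
    (hg01 : ∀ x, 0 ≤ x → 0 ≤ g x ∧ g x ≤ 1)
    (hmono : AntitoneOn g (Set.Ici 0))
    (hsmall : Tendsto (fun x : ℝ => g x * x ^ 2 * (Real.log x) ^ 2) atTop (nhds 0))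
    (hint : Integrable (fun x : EuclideanSpace ℝ (Fin 2) => g ‖x‖))
    (hC : C = ∫ x : EuclideanSpace ℝ (Fin 2), g ‖x‖) (hCpos : 0 < C) :
    Tendsto
      (fun ρ : ℝ =>
        ρ *
          Real.exp
            (-((Real.log ρ + b) / C *
                ∫ x in {x : EuclideanSpace ℝ (Fin 2) |
                    ∀ i, |x i| ≤ 1 / (2 * Real.sqrt ((Real.log ρ + b) / (C * ρ)))},
                  g ‖x‖)))
      atTop (nhds (Real.exp (-b))) := by
  have hπ := Real.pi_pos
  have hCne : C ≠ 0 := ne_of_gt hCpos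
  set L : ℝ → ℝ := fun ρ => Real.log ρ + b with hLdef
  set R : ℝ → ℝ := fun ρ => 1 / (2 * Real.sqrt ((Real.log ρ + b) / (C * ρ))) with hRdef
  set I : ℝ → ℝ := fun ρ =>
    ∫ x in {x : EuclideanSpace ℝ (Fin 2) | ∀ i, |x i| ≤ R ρ}, g ‖x‖ with hIdef
  set T : ℝ → ℝ := fun r =>
    ∫ x in {x : EuclideanSpace ℝ (Fin 2) | r ≤ ‖x‖}, g ‖x‖ with hTdef
  -- coordinate bound
  have hcoord : ∀ (x : EuclideanSpace ℝ (Fin 2)) (i : Fin 2), |x i| ≤ ‖x‖ := by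
    intro x i
    rw [EuclideanSpace.norm_eq]
    have h1 : |x i| = Real.sqrt (‖x i‖ ^ 2) := by
      rw [Real.sqrt_sq_eq_abs, abs_norm, Real.norm_eq_abs]
    rw [h1]
    exact Real.sqrt_le_sqrt (Finset.single_le_sum
      (f := fun j => ‖x j‖ ^ 2) (fun j _ => sq_nonneg _) (Finset.mem_univ i))
  -- measurability of the squares
  have hSmeas : ∀ r : ℝ, MeasurableSet {x : EuclideanSpace ℝ (Fin 2) | ∀ i, |x i| ≤ r} := by
    intro r
    have : {x : EuclideanSpace ℝ (Fin 2) | ∀ i, |x i| ≤ r}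
        = ⋂ i, {x : EuclideanSpace ℝ (Fin 2) | |x i| ≤ r} := by
      ext x; simp [Set.mem_iInter]
    rw [this]
    refine MeasurableSet.iInter fun i => ?_
    have hcont : Continuous fun x : EuclideanSpace ℝ (Fin 2) => x i := by fun_prop
    exact (isClosed_le hcont.abs continuous_const).measurableSet
  -- complement facts
  have hcompl : ∀ r : ℝ,
      C - (∫ x in {x : EuclideanSpace ℝ (Fin 2) | ∀ i, |x i| ≤ r}, g ‖x‖)
        = ∫ x in {x : EuclideanSpace ℝ (Fin 2) | ∀ i, |x i| ≤ r}ᶜ, g ‖x‖ := by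
    intro r
    have := integral_add_compl (hSmeas r) hint
    rw [hC]
    linarith
  have hCI_nonneg : ∀ r : ℝ,
      0 ≤ C - ∫ x in {x : EuclideanSpace ℝ (Fin 2) | ∀ i, |x i| ≤ r}, g ‖x‖ := by
    intro r
    rw [hcompl r]
    exact setIntegral_nonneg (hSmeas r).compl fun x _ => (hg01 _ (norm_nonneg x)).1
  have hCI_le : ∀ r : ℝ,
      C - (∫ x in {x : EuclideanSpace ℝ (Fin 2) | ∀ i, |x i| ≤ r}, g ‖x‖) ≤ T r := by
    intro r
    rw [hcompl r]
    refine setIntegral_mono_set hint.integrableOn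
      (Filter.Eventually.of_forall fun x => (hg01 _ (norm_nonneg x)).1) ?_
    refine HasSubset.Subset.eventuallyLE fun x hx => ?_
    simp only [Set.mem_compl_iff, Set.mem_setOf_eq, not_forall] at hx
    obtain ⟨i, hi⟩ := hx
    exact le_trans (le_of_lt (not_le.mp hi)) (hcoord x i)
  -- basic tendstos
  have hLtop : Tendsto L atTop atTop := tendsto_atTop_add_const_right _ b Real.tendsto_log_atTop
  have hLpos : ∀ᶠ ρ in atTop, 0 < L ρ := hLtop.eventually_gt_atTop 0
  have hρpos : ∀ᶠ ρ : ℝ in atTop, (0:ℝ) < ρ := eventually_gt_atTop 0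
  have hlogρ1 : ∀ᶠ ρ : ℝ in atTop, 1 ≤ Real.log ρ := Real.tendsto_log_atTop.eventually_ge_atTop 1
  have hLoρ : Tendsto (fun ρ => L ρ / ρ) atTop (𝓝 0) := by
    simpa using (Real.isLittleO_log_id_atTop.add
      (Asymptotics.isLittleO_const_id_atTop b)).tendsto_div_nhds_zero
  have hρoL : Tendsto (fun ρ => C * ρ / L ρ) atTop atTop := by
    have h2 : Tendsto (fun ρ => L ρ / ρ) atTop (𝓝[>] 0) :=
      tendsto_nhdsWithin_of_tendsto_nhds_of_eventually_within _ hLoρ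
        (by filter_upwards [hLpos, hρpos] with ρ h1' h2'; exact div_pos h1' h2')
    have h1 : Tendsto (fun ρ => ρ / L ρ) atTop atTop := by
      refine h2.inv_tendsto_nhdsGT_zero.congr fun ρ => ?_
      simp [inv_div]
    refine (h1.const_mul_atTop hCpos).congr fun ρ => ?_
    rw [mul_div_assoc]
  have hReq : ∀ ρ : ℝ, R ρ = Real.sqrt (C * ρ / L ρ) / 2 := by
    intro ρ
    rw [hRdef]
    simp only
    rw [show (Real.log ρ + b) / (C * ρ) = (C * ρ / L ρ)⁻¹ by rw [inv_div],
      Real.sqrt_inv, one_div, mul_inv_rev, inv_inv]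
    ring
  have hRtop : Tendsto R atTop atTop := by
    have := (sqrt_tendsto_atTop.comp hρoL).atTop_div_const (by norm_num : (0:ℝ) < 2)
    refine this.congr fun ρ => ?_
    rw [hReq ρ]; rfl
  -- L / log ρ → 1
  have h4 : Tendsto (fun ρ => L ρ / Real.log ρ) atTop (𝓝 1) := by
    have h0 : Tendsto (fun ρ : ℝ => 1 + b / Real.log ρ) atTop (𝓝 1) := by
      have := tendsto_const_nhds (x := b) (f := atTop (α := ℝ)) |>.div_atTop Real.tendsto_log_atTop
      simpa using (tendsto_const_nhds (x := (1:ℝ))).add this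
    refine h0.congr' ?_
    filter_upwards [hlogρ1] with ρ hρ
    have hne : Real.log ρ ≠ 0 := by linarith
    field_simp [hLdef]
    rfl
  -- log L / log ρ → 0
  have hLL : Tendsto (fun ρ => Real.log (L ρ) / Real.log ρ) atTop (𝓝 0) := by
    have hln : Tendsto (fun y : ℝ => Real.log y / y) atTop (𝓝 0) := by
      simpa using Real.isLittleO_log_id_atTop.tendsto_div_nhds_zero
    have hcomp : Tendsto (fun ρ => Real.log (L ρ) / L ρ) atTop (𝓝 0) := hln.comp hLtop
    have hmul := hcomp.mul h4
    rw [zero_mul] at hmul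
    refine hmul.congr' ?_
    filter_upwards [hLpos] with ρ h
    rw [div_mul_div_comm, mul_comm (Real.log (L ρ)) (L ρ), mul_comm (L ρ) (Real.log ρ),
      mul_comm (Real.log ρ) (L ρ), mul_div_mul_left _ _ h.ne']
  -- log R / log ρ → 1/2
  have hlogReq : ∀ᶠ ρ : ℝ in atTop, Real.log (R ρ)
      = (Real.log C + Real.log ρ - Real.log (L ρ)) / 2 - Real.log 2 := by
    filter_upwards [hLpos, hρpos] with ρ h1 h2
    have hq : 0 < C * ρ / L ρ := div_pos (mul_pos hCpos h2) h1
    rw [hReq ρ, Real.log_div (Real.sqrt_ne_zero'.mpr hq) two_ne_zero,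
      Real.log_sqrt hq.le, Real.log_div (mul_pos hCpos h2).ne' h1.ne',
      Real.log_mul hCne h2.ne']
  have h3 : Tendsto (fun ρ => Real.log (R ρ) / Real.log ρ) atTop (𝓝 (1/2)) := by
    have hA : Tendsto (fun ρ : ℝ => Real.log C / Real.log ρ) atTop (𝓝 0) :=
      tendsto_const_nhds.div_atTop Real.tendsto_log_atTop
    have hB : Tendsto (fun ρ : ℝ => Real.log 2 / Real.log ρ) atTop (𝓝 0) :=
      tendsto_const_nhds.div_atTop Real.tendsto_log_atTop
    have h0 : Tendsto (fun ρ : ℝ =>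
        (Real.log C / Real.log ρ + 1 - Real.log (L ρ) / Real.log ρ) / 2
          - Real.log 2 / Real.log ρ) atTop (𝓝 ((0 + 1 - 0) / 2 - 0)) :=
      (((hA.add tendsto_const_nhds).sub hLL).div_const 2).sub hB
    norm_num at h0
    refine h0.congr' ?_
    filter_upwards [hlogReq, hlogρ1] with ρ heq h1
    have hne : Real.log ρ ≠ 0 := by linarith
    rw [heq]
    field_simp
  -- L / log R → 2
  have h5 : Tendsto (fun ρ => L ρ / Real.log (R ρ)) atTop (𝓝 2) := by
    have h0 := h4.div h3 (by norm_num)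
    norm_num at h0
    refine h0.congr' ?_
    filter_upwards [hlogρ1] with ρ h1
    have hne : Real.log ρ ≠ 0 := by linarith
    rcases eq_or_ne (Real.log (R ρ)) 0 with h|h
    · simp [h]
    · simp only [Pi.div_apply]; field_simp
  -- upper bound tends to zero
  have hTtend : Tendsto (fun ρ => Real.log (R ρ) * T (R ρ)) atTop (𝓝 0) := by
    have := (tail_tendsto g hg01 hmono hsmall).comp hRtop
    exact this
  have hUp : Tendsto (fun ρ => L ρ / C * T (R ρ)) atTop (𝓝 0) := by
    have h0 := (h5.mul hTtend).div_const C
    rw [mul_zero, zero_div] at h0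
    refine h0.congr' ?_
    filter_upwards [(Real.tendsto_log_atTop.comp hRtop).eventually_ge_atTop 1] with ρ h1
    have hne : Real.log (R ρ) ≠ 0 := by
      have : (1:ℝ) ≤ Real.log (R ρ) := h1
      linarith
    field_simp
  -- squeeze
  have hkey : Tendsto (fun ρ => L ρ / C * (C - I ρ)) atTop (𝓝 0) := by
    refine tendsto_of_tendsto_of_tendsto_of_le_of_le' tendsto_const_nhds hUp ?_ ?_
    · filter_upwards [hLpos] with ρ h
      exact mul_nonneg (div_nonneg h.le hCpos.le) (hCI_nonneg (R ρ))
    · filter_upwards [hLpos] with ρ h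
      exact mul_le_mul_of_nonneg_left (hCI_le (R ρ)) (div_nonneg h.le hCpos.le)
  -- conclude
  have hexp : Tendsto (fun ρ => Real.exp (-b + L ρ / C * (C - I ρ))) atTop
      (𝓝 (Real.exp (-b))) := by
    have h0 : Tendsto (fun ρ => -b + L ρ / C * (C - I ρ)) atTop (𝓝 (-b + 0)) :=
      tendsto_const_nhds.add hkey
    rw [add_zero] at h0
    exact (Real.continuous_exp.tendsto _).comp h0
  refine hexp.congr' ?_
  filter_upwards [hρpos] with ρ hρ
  simp only [hIdef, hLdef, hRdef]
  rw [show ρ * Real.exp (-((Real.log ρ + b) / C *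
      ∫ x in {x : EuclideanSpace ℝ (Fin 2) |
        ∀ i, |x i| ≤ 1 / (2 * Real.sqrt ((Real.log ρ + b) / (C * ρ)))}, g ‖x‖))
    = Real.exp (Real.log ρ + -((Real.log ρ + b) / C *
      ∫ x in {x : EuclideanSpace ℝ (Fin 2) |
        ∀ i, |x i| ≤ 1 / (2 * Real.sqrt ((Real.log ρ + b) / (C * ρ)))}, g ‖x‖))
    from by rw [Real.exp_add, Real.exp_log hρ]]
  congr 1
  generalize (∫ x in {x : EuclideanSpace ℝ (Fin 2) |
      ∀ i, |x i| ≤ 1 / (2 * Real.sqrt ((Real.log ρ + b) / (C * ρ)))}, g ‖x‖) = J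
  field_simp
  ring
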